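/- arXiv:2410.19551 — 3 statements merged into one kernel-verified Lean document; each statement's English description precedes it below -/
import Mathlib

section
/- Let G be a locally compact second countable topological group with no small subgroups, i.e., there is a neighborhood U of the identity such that the only subgroup of G contained in U is the trivial subgroup. If (Γ_i)_{i∈ℕ} is a sequence of discrete subgroups of G converging in the Chabauty topology to a discrete subgroup Γ of G, then the counting measures Σ_{γ∈Γ_i} δ_γ converge vaguely to the counting measure Σ_{γ∈Γ} δ_γ, as measures on G. -/
open MeasureTheory Filter Topology

/-- A sequence of closed subgroups `Γ i` converges to a closed subgroup `H` in the Chabauty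
topology: (i) every `h ∈ H` is a limit of a sequence `γ i ∈ Γ i`, and (ii) every limit of a
convergent subsequence `γ (k j) ∈ Γ (k j)` lies in `H`. -/
def ChabautyLim {G : Type*} [Group G] [TopologicalSpace G]
    (Γ : ℕ → Subgroup G) (H : Subgroup G) : Prop :=
  (∀ h ∈ H, ∃ γ : ℕ → G, (∀ i, γ i ∈ Γ i) ∧ Tendsto γ atTop (𝓝 h)) ∧
  (∀ k : ℕ → ℕ, StrictMono k → ∀ γ : ℕ → G, (∀ j, γ j ∈ Γ (k j)) →
    ∀ x : G, Tendsto γ atTop (𝓝 x) → x ∈ H)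

/-- The counting measure of a discrete subgroup `Γ ≤ G`, viewed as a measure on `G` via
pushforward along the inclusion. -/
noncomputable def countingMeasure {G : Type*} [Group G] [TopologicalSpace G]
    [MeasurableSpace G] (Γ : Subgroup G) : Measure G :=
  (Measure.count : Measure Γ).map (Subtype.val)

open Pointwise

lemma integral_countingMeasure_eq_sum {G : Type*} [Group G] [TopologicalSpace G] [T2Space G]
    [MeasurableSpace G] [BorelSpace G]
    (Γ' : Subgroup G) [Countable Γ'] (f : G → ℝ) (t : Finset G)
    (hts : ↑t ⊆ (Γ' : Set G)) (hsupp : ∀ γ ∈ Γ', f γ ≠ 0 → γ ∈ t) :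
    ∫ g, f g ∂(countingMeasure Γ') = ∑ g ∈ t, f g := by
  have hcnt : (Γ' : Set G).Countable := Set.countable_coe_iff.mp ‹Countable Γ'›
  have hmeas : MeasurableSet (Γ' : Set G) := hcnt.measurableSet
  have hemb : MeasurableEmbedding ((↑) : Γ' → G) := MeasurableEmbedding.subtype_coe hmeas
  rw [countingMeasure, hemb.integral_map]
  classical
  set t' : Finset Γ' := t.preimage Subtype.val (Set.injOn_of_injective Subtype.coe_injective)
    with ht'
  have hzero : ∀ x : Γ', x ∉ t' → f ↑x = 0 := by
    intro x hx
    by_contra h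
    exact hx (by simpa [ht', Finset.mem_preimage] using hsupp ↑x x.2 h)
  have hsum : Summable (fun x : Γ' => ‖f ↑x‖) :=
    summable_of_ne_finset_zero (s := t') (fun x hx => by simp [hzero x hx])
  have hint : Integrable (fun x : Γ' => f ↑x) Measure.count := integrable_count_iff.mpr hsum
  rw [integral_countable' hint]
  rw [tsum_eq_sum (s := t') (f := fun x : Γ' => Measure.count.real {x} • f ↑x)
    (fun x hx => by simp [hzero x hx])]
  simp only [Measure.real, Measure.count_singleton, ENNReal.toReal_one, one_smul]
  exact Finset.sum_preimage Subtype.val t _ f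
    (fun x hx hn => absurd (hts hx) (by simpa [Subtype.range_coe] using hn))

lemma unif_disc {G : Type*} [Group G] [TopologicalSpace G] [IsTopologicalGroup G] [T2Space G]
    [LocallyCompactSpace G] [SecondCountableTopology G]
    (hNSS : ∃ U ∈ 𝓝 (1 : G), ∀ K : Subgroup G, (K : Set G) ⊆ U → K = ⊥)
    (Γseq : ℕ → Subgroup G)
    (Γ : Subgroup G) (hdisc : DiscreteTopology Γ)
    (hchab : ChabautyLim Γseq Γ) :
    ∃ V ∈ 𝓝 (1 : G), ∃ N : ℕ, ∀ i ≥ N, ∀ γ ∈ Γseq i, γ ∈ V → γ = 1 := by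
  classical
  obtain ⟨U, hU, hUN⟩ := hNSS
  -- a neighborhood of 1 meeting Γ only in 1
  obtain ⟨V₁, hV₁open, hV₁pre⟩ :
      ∃ V₁ : Set G, IsOpen V₁ ∧ Subtype.val ⁻¹' V₁ = ({1} : Set Γ) := by
    have : IsOpen ({1} : Set Γ) := isOpen_discrete _
    rw [isOpen_induced_iff] at this
    obtain ⟨V₁, h1, h2⟩ := this
    exact ⟨V₁, h1, h2⟩
  have hV₁mem : (1 : G) ∈ V₁ := by
    have : ((1 : Γ) : G) ∈ V₁ := by
      have : (1 : Γ) ∈ Subtype.val ⁻¹' V₁ := by rw [hV₁pre]; rfl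
      exact this
    simpa using this
  have hV₁ : ∀ g ∈ Γ, g ∈ V₁ → g = 1 := by
    intro g hg hgV
    have : (⟨g, hg⟩ : Γ) ∈ Subtype.val ⁻¹' V₁ := hgV
    rw [hV₁pre] at this
    simpa [Subtype.ext_iff] using this
  -- compact neighborhood inside U ∩ V₁
  obtain ⟨K₀, hK₀nhds, hK₀sub, hK₀comp⟩ :=
    local_compact_nhds (x := (1 : G)) (inter_mem hU (hV₁open.mem_nhds hV₁mem))
  -- small symmetric open V₀ with V₀ * V₀ ⊆ interior K₀
  obtain ⟨V', hV'open, hV'mem, hV'mul⟩ :=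
    exists_open_nhds_one_mul_subset (interior_mem_nhds.mpr hK₀nhds)
  set V₀ : Set G := V' ∩ V'⁻¹ with hV₀def
  have hV₀open : IsOpen V₀ := hV'open.inter hV'open.inv
  have hV₀mem : (1 : G) ∈ V₀ := ⟨hV'mem, by simpa using hV'mem⟩
  have hV₀symm : ∀ a ∈ V₀, a⁻¹ ∈ V₀ := by
    rintro a ⟨h1, h2⟩
    exact ⟨h2, by simpa using h1⟩
  have hV₀mul : V₀ * V₀ ⊆ interior K₀ :=
    (Set.mul_subset_mul Set.inter_subset_left Set.inter_subset_left).trans hV'mul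
  have hV₀K₀ : V₀ ⊆ interior K₀ := fun a ha =>
    hV₀mul (by simpa using Set.mul_mem_mul ha hV₀mem)
  have hV₀U : V₀ ⊆ U := fun a ha => (hK₀sub (interior_subset (hV₀K₀ ha))).1
  -- main contradiction argument
  by_contra hcon
  push_neg at hcon
  obtain ⟨B, hB⟩ := (𝓝 (1 : G)).exists_antitone_basis
  have hsel : ∀ k N : ℕ, ∃ i ≥ N, ∃ γ ∈ Γseq i, γ ∈ B k ∧ γ ≠ 1 := by
    intro k N
    obtain ⟨i, hiN, γ, hγΓ, hγB, hγne⟩ := hcon (B k) (hB.1.mem_of_mem trivial) N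
    exact ⟨i, hiN, γ, hγΓ, hγB, hγne⟩
  choose idx hidx elt helt₁ helt₂ helt₃ using hsel
  set Nf : ℕ → ℕ := fun k => Nat.rec 0 (fun k ih => idx k ih + 1) k with hNf
  set φ : ℕ → ℕ := fun k => idx k (Nf k) with hφ
  have hφmono : StrictMono φ := by
    apply strictMono_nat_of_lt_succ
    intro k
    have h1 : Nf (k + 1) = φ k + 1 := rfl
    have h2 : φ (k + 1) = idx (k + 1) (Nf (k + 1)) := rfl
    have := hidx (k + 1) (Nf (k + 1))
    omega
  set γs : ℕ → G := fun k => elt k (Nf k) with hγs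
  have hγsΓ : ∀ k, γs k ∈ Γseq (φ k) := fun k => helt₁ k (Nf k)
  have hγsne : ∀ k, γs k ≠ 1 := fun k => helt₃ k (Nf k)
  have hγstend : Tendsto γs atTop (𝓝 (1 : G)) :=
    hB.tendsto (fun k => helt₂ k (Nf k))
  -- for each k there is a power escaping V₀
  have hescape : ∀ k, ∃ n : ℕ, γs k ^ (n + 1) ∉ V₀ := by
    intro k
    by_contra hall
    push_neg at hall
    have hsub : (Subgroup.zpowers (γs k) : Set G) ⊆ U := by
      rintro x ⟨m, rfl⟩
      rcases m with m | m
      · cases m with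
        | zero => simpa using hV₀U hV₀mem
        | succ n =>
          show γs k ^ ((n + 1 : ℕ) : ℤ) ∈ U
          rw [zpow_natCast]; exact hV₀U (hall n)
      · show γs k ^ (Int.negSucc m) ∈ U
        rw [zpow_negSucc]; exact hV₀U (hV₀symm _ (hall m))
    have := hUN _ hsub
    have h1 : γs k ∈ Subgroup.zpowers (γs k) := Subgroup.mem_zpowers _
    rw [this] at h1
    exact hγsne k (by simpa using h1)
  set n : ℕ → ℕ := fun k => Nat.find (hescape k) with hns
  have hn : ∀ k, γs k ^ (n k + 1) ∉ V₀ := fun k => Nat.find_spec (hescape k)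
  have hnmin : ∀ k m, m < n k → γs k ^ (m + 1) ∈ V₀ := fun k m hm => by
    have := Nat.find_min (hescape k) hm
    simpa using this
  -- eventually γs k ∈ V₀
  obtain ⟨k₀, hk₀⟩ := eventually_atTop.mp (hγstend.eventually (hV₀open.mem_nhds hV₀mem))
  -- the escaping powers lie in K₀ \ V₀
  set δ : ℕ → G := fun j => γs (j + k₀) ^ (n (j + k₀) + 1) with hδ
  have hδΓ : ∀ j, δ j ∈ Γseq (φ (j + k₀)) := fun j => pow_mem (hγsΓ _) _
  have hδnot : ∀ j, δ j ∉ V₀ := fun j => hn _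
  have hδK₀ : ∀ j, δ j ∈ K₀ := by
    intro j
    have hpow : γs (j + k₀) ^ (n (j + k₀)) ∈ V₀ := by
      cases hnn : n (j + k₀) with
      | zero => simpa using hV₀mem
      | succ m => exact hnmin (j + k₀) m (by omega)
    have hbase : γs (j + k₀) ∈ V₀ := hk₀ (j + k₀) (by omega)
    have : δ j ∈ V₀ * V₀ := by
      rw [hδ]
      simp only [pow_succ]
      exact Set.mul_mem_mul hpow hbase
    exact interior_subset (hV₀mul this)
  -- extract a convergent subsequence
  obtain ⟨x, hxK₀, ψ, hψ, hconv⟩ := hK₀comp.tendsto_subseq hδK₀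
  have hxΓ : x ∈ Γ := hchab.2 (fun j => φ (ψ j + k₀))
    (hφmono.comp (hψ.add_const k₀)) (fun j => δ (ψ j))
    (fun j => hδΓ (ψ j)) x hconv
  have hxnot : x ∉ V₀ := by
    have hcl : x ∈ closure (V₀ᶜ) :=
      mem_closure_of_tendsto hconv (Eventually.of_forall fun j => hδnot (ψ j))
    rwa [hV₀open.isClosed_compl.closure_eq] at hcl
  have hx1 : x = 1 := hV₁ x hxΓ (hK₀sub hxK₀).2
  rw [hx1] at hxnot
  exact hxnot hV₀mem

/-- If `G` is a locally compact second countable group with no small subgroups and the discrete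
subgroups `Γ i` converge in the Chabauty topology to a *discrete* subgroup `Γ`, then the counting
measures of the `Γ i` converge vaguely to the counting measure of `Γ`. -/
theorem stmt_2 {G : Type*} [Group G] [TopologicalSpace G] [IsTopologicalGroup G] [T2Space G]
    [LocallyCompactSpace G] [SecondCountableTopology G]
    [MeasurableSpace G] [BorelSpace G]
    (hNSS : ∃ U ∈ 𝓝 (1 : G), ∀ K : Subgroup G, (K : Set G) ⊆ U → K = ⊥)
    (Γseq : ℕ → Subgroup G) (hΓdisc : ∀ i, DiscreteTopology (Γseq i))
    (Γ : Subgroup G) (hdisc : DiscreteTopology Γ) (hcl : IsClosed (Γ : Set G))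
    (hchab : ChabautyLim Γseq Γ) :
    ∀ f : G → ℝ, Continuous f → HasCompactSupport f →
      Tendsto (fun i => ∫ g, f g ∂(countingMeasure (Γseq i))) atTop
        (𝓝 (∫ g, f g ∂(countingMeasure Γ))) := by
  classical
  intro f hf hfsupp
  haveI hcntseq : ∀ i, Countable (Γseq i) := fun i => by
    haveI := hΓdisc i
    exact TopologicalSpace.separableSpace_iff_countable.mp inferInstance
  haveI : Countable Γ := TopologicalSpace.separableSpace_iff_countable.mp inferInstance
  obtain ⟨V, hV, N₀, hN₀⟩ := unif_disc hNSS Γseq Γ hdisc hchab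
  set K : Set G := tsupport f with hKdef
  have hKcomp : IsCompact K := hfsupp
  obtain ⟨L, hLcomp, hKL⟩ := exists_compact_superset hKcomp
  have hKL' : K ⊆ L := hKL.trans interior_subset
  -- Γ ∩ L is finite
  have hfin : ((Γ : Set G) ∩ L).Finite := by
    have hcomp : IsCompact ((Γ : Set G) ∩ L) := hLcomp.inter_left hcl
    haveI : DiscreteTopology ↥((Γ : Set G) ∩ L) :=
      DiscreteTopology.of_subset hdisc Set.inter_subset_left
    exact hcomp.finite (isDiscrete_iff_discreteTopology.mpr this)
  set F : Finset G := hfin.toFinset with hFdef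
  have hFmem : ∀ x, x ∈ F ↔ x ∈ (Γ : Set G) ∩ L := fun x => hfin.mem_toFinset
  -- approximating sequences
  have happrox : ∀ x : F, ∃ c : ℕ → G, (∀ i, c i ∈ Γseq i) ∧ Tendsto c atTop (𝓝 (x : G)) :=
    fun x => hchab.1 x ((hFmem x).1 x.2).1
  choose c hc₁ hc₂ using happrox
  -- a neighborhood avoiding differences of distinct points of F
  set bad : Finset G := ((F ×ˢ F).filter (fun p => p.1 ≠ p.2)).image (fun p => p.1⁻¹ * p.2)
    with hbaddef
  have h1bad : (1 : G) ∉ bad := by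
    intro h
    rw [hbaddef, Finset.mem_image] at h
    obtain ⟨p, hp, hp1⟩ := h
    rw [Finset.mem_filter] at hp
    exact hp.2 (by rwa [inv_mul_eq_one] at hp1)
  have hU' : V ∩ (↑bad : Set G)ᶜ ∈ 𝓝 (1 : G) :=
    inter_mem hV ((bad.finite_toSet.isClosed.isOpen_compl).mem_nhds (by simpa using h1bad))
  obtain ⟨W, hWopen, hWmem, hWmul⟩ := exists_open_nhds_one_mul_subset hU'
  set W₁ : Set G := W ∩ W⁻¹ with hW₁def
  have hW₁open : IsOpen W₁ := hWopen.inter hWopen.inv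
  have hW₁mem : (1 : G) ∈ W₁ := ⟨hWmem, by simpa using hWmem⟩
  have hW₁symm : ∀ a ∈ W₁, a⁻¹ ∈ W₁ := by
    rintro a ⟨h1, h2⟩
    exact ⟨h2, by simpa using h1⟩
  have hW₁mul : W₁ * W₁ ⊆ V ∩ (↑bad : Set G)ᶜ :=
    (Set.mul_subset_mul Set.inter_subset_left Set.inter_subset_left).trans hWmul
  -- balls around points
  set Ball : G → Set G := fun x => (fun y => x⁻¹ * y) ⁻¹' W₁ with hBalldef
  have hBallopen : ∀ x, IsOpen (Ball x) :=
    fun x => hW₁open.preimage (continuous_const.mul continuous_id)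
  have hBallself : ∀ x, x ∈ Ball x := by
    intro x
    show x⁻¹ * x ∈ W₁
    simpa using hW₁mem
  -- separation within a ball
  have hsep : ∀ i, i ≥ N₀ → ∀ (x γ γ' : G), γ ∈ Γseq i → γ' ∈ Γseq i →
      γ ∈ Ball x → γ' ∈ Ball x → γ = γ' := by
    intro i hi x γ γ' hγΓ hγ'Γ hγ hγ'
    have h1 : (x⁻¹ * γ)⁻¹ * (x⁻¹ * γ') ∈ W₁ * W₁ := Set.mul_mem_mul (hW₁symm _ hγ) hγ'
    have heq : (x⁻¹ * γ)⁻¹ * (x⁻¹ * γ') = γ⁻¹ * γ' := by group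
    rw [heq] at h1
    have := hN₀ i hi _ (mul_mem (inv_mem hγΓ) hγ'Γ) (hW₁mul h1).1
    rwa [inv_mul_eq_one] at this
  -- disjointness of balls around distinct points of F
  have hdisj : ∀ x ∈ F, ∀ y ∈ F, x ≠ y → ∀ z, z ∈ Ball x → z ∈ Ball y → False := by
    intro x hx y hy hxy z hzx hzy
    have h1 : (x⁻¹ * z) * (y⁻¹ * z)⁻¹ ∈ W₁ * W₁ := Set.mul_mem_mul hzx (hW₁symm _ hzy)
    have heq : (x⁻¹ * z) * (y⁻¹ * z)⁻¹ = x⁻¹ * y := by group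
    rw [heq] at h1
    apply (hW₁mul h1).2
    rw [hbaddef]
    simp only [Finset.coe_image, Set.mem_image, Finset.mem_coe, Finset.mem_filter]
    exact ⟨(x, y), ⟨Finset.mem_product.mpr ⟨hx, hy⟩, hxy⟩, rfl⟩
  -- eventually every γ ∈ Γseq i in K lies in some ball
  have hE1 : ∀ᶠ i in atTop, ∀ γ ∈ Γseq i, γ ∈ K → ∃ x ∈ F, γ ∈ Ball x := by
    by_contra hcon
    rw [not_eventually] at hcon
    have hcon' : ∃ᶠ i in atTop, ∃ γ, γ ∈ Γseq i ∧ γ ∈ K ∧ ∀ x ∈ F, γ ∉ Ball x := by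
      apply hcon.mono
      intro i hi
      push_neg at hi
      obtain ⟨γ, hγ1, hγ2, hγ3⟩ := hi
      exact ⟨γ, hγ1, hγ2, hγ3⟩
    obtain ⟨φ, hφ, hφP⟩ := extraction_of_frequently_atTop hcon'
    choose γs hγs1 hγs2 hγs3 using hφP
    obtain ⟨x, hxK, ψ, hψ, hconv⟩ := hKcomp.tendsto_subseq hγs2
    have hxΓ : x ∈ Γ := hchab.2 (φ ∘ ψ) (hφ.comp hψ) (fun j => γs (ψ j))
      (fun j => hγs1 (ψ j)) x hconv
    have hxF : x ∈ F := (hFmem x).2 ⟨hxΓ, hKL' hxK⟩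
    have hxnot : x ∉ Ball x := by
      have hcl : x ∈ closure ((Ball x)ᶜ) := mem_closure_of_tendsto hconv
        (Eventually.of_forall fun j => hγs3 (ψ j) x hxF)
      rwa [(hBallopen x).isClosed_compl.closure_eq] at hcl
    exact hxnot (hBallself x)
  -- eventually the approximants are in their balls
  have hE2 : ∀ᶠ i in atTop, ∀ x : F, c x i ∈ Ball ↑x := by
    rw [eventually_all]
    intro x
    exact (hc₂ x).eventually_mem ((hBallopen (x : G)).mem_nhds (hBallself _))
  -- eventual formula for the integrals
  have hmain : ∀ᶠ i in atTop,
      (∫ g, f g ∂(countingMeasure (Γseq i))) = ∑ x ∈ F.attach, f (c x i) := by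
    filter_upwards [hE1, hE2, eventually_ge_atTop N₀] with i h1 h2 hiN
    set t : Finset G := F.attach.image (fun x => c x i) with htdef
    have hts : ↑t ⊆ (Γseq i : Set G) := by
      intro g hg
      rw [htdef, Finset.coe_image] at hg
      obtain ⟨x, _, rfl⟩ := hg
      exact hc₁ x i
    have hsupp' : ∀ γ ∈ Γseq i, f γ ≠ 0 → γ ∈ t := by
      intro γ hγΓ hγne
      have hγK : γ ∈ K := subset_tsupport f hγne
      obtain ⟨x, hxF, hγball⟩ := h1 γ hγΓ hγK
      have hγeq : γ = c ⟨x, hxF⟩ i :=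
        hsep i hiN x γ (c ⟨x, hxF⟩ i) hγΓ (hc₁ _ i) hγball (h2 ⟨x, hxF⟩)
      rw [hγeq, htdef, Finset.mem_image]
      exact ⟨⟨x, hxF⟩, Finset.mem_attach _ _, rfl⟩
    rw [integral_countingMeasure_eq_sum (Γseq i) f t hts hsupp']
    refine Finset.sum_image ?_
    intro x _ y _ hxy
    by_contra hne
    exact hdisj x x.2 y y.2 (fun h => hne (Subtype.ext h)) (c x i) (h2 x) (by simp only at hxy; rw [hxy]; exact h2 y)
  -- the limit integral
  have hRHS : (∫ g, f g ∂(countingMeasure Γ)) = ∑ x ∈ F.attach, f ↑x := by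
    rw [integral_countingMeasure_eq_sum Γ f F (fun g hg => ((hFmem g).1 hg).1)
      (fun γ hγΓ hγne => (hFmem γ).2 ⟨hγΓ, hKL' (subset_tsupport f hγne)⟩)]
    exact (Finset.sum_attach F f).symm
  rw [hRHS]
  refine Tendsto.congr' (hmain.mono fun i hi => hi.symm) ?_
  exact tendsto_finset_sum _ (fun x _ => (hf.tendsto (x : G)).comp (hc₂ x))
end

section
/- Let G be a locally compact group with a left Haar measure ν, let Γ be a discrete subgroup of G, let U be a symmetric (U = U^{−1}) relatively compact open neighborhood of the identity, and let C ⊆ G be compact. Then #(Γ ∩ C) · ν(U) ≤ ν(C·U) · #(Γ ∩ U²), where U² := U·U and all the cardinalities involved are finite. -/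
open MeasureTheory Pointwise

/-- Packing estimate: if `ν` is a left Haar measure on a locally compact group `G`, `Γ` is a
discrete subgroup, `U` is a symmetric relatively compact open neighborhood of the identity and
`C ⊆ G` is compact, then `#(Γ ∩ C) · ν(U) ≤ ν(C·U) · #(Γ ∩ U²)`, all cardinalities involved
being finite. -/
theorem stmt_11 {G : Type*} [Group G] [TopologicalSpace G] [IsTopologicalGroup G] [T2Space G]
    [LocallyCompactSpace G] [MeasurableSpace G] [BorelSpace G]
    (ν : Measure G) (hν : ν.IsHaarMeasure)
    (Γ : Subgroup G) (hΓ : DiscreteTopology Γ)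
    (U : Set G) (hUopen : IsOpen U) (hUone : (1 : G) ∈ U) (hUsymm : U⁻¹ = U)
    (hUrc : IsCompact (closure U))
    (C : Set G) (hC : IsCompact C) :
    ((Γ : Set G) ∩ C).Finite ∧ ((Γ : Set G) ∩ (U * U)).Finite ∧
      (((Γ : Set G) ∩ C).ncard : ENNReal) * ν U ≤
        ν (C * U) * (((Γ : Set G) ∩ (U * U)).ncard : ENNReal) := by
  classical
  haveI := hν
  have hΓclosed : IsClosed (Γ : Set G) := Subgroup.isClosed_of_discrete
  have hdisc : DiscreteTopology ((Γ : Set G) : Set G) := hΓ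
  have hfin : ∀ K : Set G, IsCompact K → ((Γ : Set G) ∩ K).Finite := by
    intro K hK
    have hcpt : IsCompact ((Γ : Set G) ∩ K) := hK.inter_left hΓclosed
    haveI : DiscreteTopology ((Γ : Set G) ∩ K : Set G) :=
      DiscreteTopology.of_subset hdisc Set.inter_subset_left
    exact hcpt.finite (isDiscrete_iff_discreteTopology.mpr this)
  have finC : ((Γ : Set G) ∩ C).Finite := hfin C hC
  have finW : ((Γ : Set G) ∩ (U * U)).Finite := by
    refine (hfin _ (hUrc.mul hUrc)).subset ?_
    exact Set.inter_subset_inter_right _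
      (Set.mul_subset_mul subset_closure subset_closure)
  refine ⟨finC, finW, ?_⟩
  set S : Finset G := finC.toFinset with hS
  set W : Finset G := finW.toFinset with hW
  set P : Finset G → Prop := fun F => (↑F : Set G).Pairwise fun a b => Disjoint (a • U) (b • U)
    with hP
  obtain ⟨F, hFT, hFmax⟩ : ∃ F ∈ (S.powerset.filter fun F => P F),
      ∀ x' ∈ (S.powerset.filter fun F => P F), ¬ F < x' := by
    obtain ⟨F, hF1, hF2⟩ := Finset.exists_maximal (s := S.powerset.filter fun F => P F)
      ⟨∅, by simp [hP]⟩
    exact ⟨F, hF1, fun x hx hlt => lt_irrefl _ (hlt.trans_le (hF2 hx hlt.le))⟩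
  rw [Finset.mem_filter, Finset.mem_powerset] at hFT
  obtain ⟨hFS, hFP⟩ := hFT
  -- key claim
  have key : ∀ γ ∈ S, ∃ f ∈ F, f⁻¹ * γ ∈ (Γ : Set G) ∩ (U * U) := by
    intro γ hγ
    have hγ' : γ ∈ (Γ : Set G) ∩ C := by rwa [hS, Set.Finite.mem_toFinset] at hγ
    by_cases hmem : γ ∈ F
    · refine ⟨γ, hmem, ?_⟩
      simp only [inv_mul_cancel]
      exact ⟨Subgroup.one_mem Γ, ⟨1, hUone, 1, hUone, by simp⟩⟩
    · have hlt : F < insert γ F := Finset.ssubset_insert hmem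
      have hsub : insert γ F ⊆ S := Finset.insert_subset hγ hFS
      have hnot : ¬ P (insert γ F) := by
        intro hPI
        exact hFmax _ (Finset.mem_filter.2 ⟨Finset.mem_powerset.2 hsub, hPI⟩) hlt
      rw [hP] at hnot
      simp only [Finset.coe_insert] at hnot
      haveI : Std.Symm (fun a b : G => Disjoint (a • U) (b • U)) := ⟨fun a b h => h.symm⟩
      rw [Set.pairwise_insert_of_symm] at hnot
      push_neg at hnot
      obtain ⟨f, hfF, hne, hnd⟩ := hnot hFP
      obtain ⟨x, hx1, hx2⟩ := Set.not_disjoint_iff.1 hnd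
      obtain ⟨u, huU, hu⟩ := hx1
      obtain ⟨v, hvU, hv⟩ := hx2
      have hf' : f ∈ (Γ : Set G) ∩ C := by
        have := hFS hfF; rwa [hS, Set.Finite.mem_toFinset] at this
      have h1 : γ * u = f * v := by
        have := hu.trans hv.symm
        simpa [smul_eq_mul] using this
      have heq : f⁻¹ * γ = v * u⁻¹ :=
        calc f⁻¹ * γ = f⁻¹ * (γ * u) * u⁻¹ := by group
        _ = f⁻¹ * (f * v) * u⁻¹ := by rw [h1]
        _ = v * u⁻¹ := by group
      refine ⟨f, hfF, mul_mem (inv_mem hf'.1) hγ'.1, ?_⟩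
      rw [heq]
      have huinv : u⁻¹ ∈ U := by rw [← hUsymm]; exact Set.inv_mem_inv.2 huU
      exact Set.mul_mem_mul hvU huinv
  -- counting: S.card ≤ F.card * W.card
  have hcount : S.card ≤ F.card * W.card := by
    have key' : ∀ γ : G, ∃ f : G, γ ∈ S → f ∈ F ∧ f⁻¹ * γ ∈ (Γ : Set G) ∩ (U * U) := by
      intro γ
      by_cases h : γ ∈ S
      · obtain ⟨f, hf1, hf2⟩ := key γ h; exact ⟨f, fun _ => ⟨hf1, hf2⟩⟩
      · exact ⟨1, fun h' => absurd h' h⟩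
    choose g hg using key'
    calc S.card ≤ (F ×ˢ W).card := by
          apply Finset.card_le_card_of_injOn (fun γ => (g γ, (g γ)⁻¹ * γ))
          · intro γ hγ
            obtain ⟨h1, h2⟩ := hg γ hγ
            exact Finset.mem_product.2 ⟨h1, by rw [hW, Set.Finite.mem_toFinset]; exact h2⟩
          · intro a _ b _ hab
            simp only [Prod.mk.injEq] at hab
            have : (g a) * ((g a)⁻¹ * a) = (g b) * ((g b)⁻¹ * b) := by rw [hab.2, hab.1]
            simpa using this
      _ = F.card * W.card := Finset.card_product F W
  -- measure estimate: F.card * ν U ≤ ν (C * U)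
  have hmeasure : (F.card : ENNReal) * ν U ≤ ν (C * U) := by
    have hdisj : (↑F : Set G).PairwiseDisjoint fun f => f • U := hFP
    have hsum : ν (⋃ f ∈ F, f • U) = ∑ f ∈ F, ν (f • U) :=
      measure_biUnion_finset hdisj (fun f _ => (hUopen.smul f).measurableSet)
    have hval : ∀ f : G, ν (f • U) = ν U := fun f => measure_smul ν f U
    have hUsub : (⋃ f ∈ F, f • U) ⊆ C * U := by
      intro x hx
      simp only [Set.mem_iUnion] at hx
      obtain ⟨f, hf, hxf⟩ := hx
      obtain ⟨u, huU, hu⟩ := hxf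
      have hfC : f ∈ C := by
        have := hFS hf; rw [hS, Set.Finite.mem_toFinset] at this; exact this.2
      rw [← hu]
      exact Set.mul_mem_mul hfC huU
    calc (F.card : ENNReal) * ν U = ∑ f ∈ F, ν (f • U) := by
          simp [hval, Finset.sum_const, nsmul_eq_mul]
      _ = ν (⋃ f ∈ F, f • U) := hsum.symm
      _ ≤ ν (C * U) := measure_mono hUsub
  -- combine
  have hSncard : ((Γ : Set G) ∩ C).ncard = S.card := Set.ncard_eq_toFinset_card _ finC
  have hWncard : ((Γ : Set G) ∩ (U * U)).ncard = W.card := Set.ncard_eq_toFinset_card _ finW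
  rw [hSncard, hWncard]
  calc (S.card : ENNReal) * ν U ≤ ((F.card * W.card : ℕ) : ENNReal) * ν U := by
        exact_mod_cast mul_le_mul_left (by exact_mod_cast hcount) (ν U)
    _ = (W.card : ENNReal) * ((F.card : ENNReal) * ν U) := by push_cast; ring
    _ ≤ (W.card : ENNReal) * ν (C * U) := mul_le_mul_right hmeasure _
    _ = ν (C * U) * (W.card : ENNReal) := mul_comm _ _
end

section
/- Let G be a topological group and let U be a neighborhood of the identity e such that the only subgroup of G contained in U is the trivial subgroup {e}. Let U₁ be a symmetric (U₁ = U₁^{−1}) subset of G containing e with U₁·U₁ ⊆ U. If Γ is a subgroup of G such that Γ ∩ (U₁⁴ ∖ U₁²) = ∅, then Γ ∩ U₁² = {e}, where U₁² := U₁·U₁ and U₁⁴ := U₁·U₁·U₁·U₁. -/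
open Pointwise Topology

/-- Let `G` be a topological group and `U` a neighborhood of the identity containing no
non-trivial subgroup of `G`. Let `U₁` be a symmetric subset containing the identity with
`U₁·U₁ ⊆ U`. If a subgroup `Γ` avoids the annulus `U₁⁴ ∖ U₁²`, then `Γ ∩ U₁² = {1}`. -/
theorem stmt_13 {G : Type*} [Group G] [TopologicalSpace G]
    (U : Set G) (hU : U ∈ 𝓝 (1 : G))
    (hNSS : ∀ K : Subgroup G, (K : Set G) ⊆ U → K = ⊥)
    (U₁ : Set G) (hone : (1 : G) ∈ U₁) (hsymm : U₁⁻¹ = U₁) (hU₁ : U₁ * U₁ ⊆ U)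
    (Γ : Subgroup G)
    (havoid : (Γ : Set G) ∩ ((U₁ * U₁ * U₁ * U₁) \ (U₁ * U₁)) = ∅) :
    (Γ : Set G) ∩ (U₁ * U₁) = {1} := by
  have hinv : ∀ x ∈ U₁ * U₁, x⁻¹ ∈ U₁ * U₁ := by
    intro x hx
    obtain ⟨a, ha, b, hb, rfl⟩ := hx
    rw [mul_inv_rev]
    exact Set.mul_mem_mul (hsymm ▸ Set.inv_mem_inv.mpr hb) (hsymm ▸ Set.inv_mem_inv.mpr ha)
  have hmul : ∀ x ∈ (Γ : Set G) ∩ (U₁ * U₁), ∀ y ∈ (Γ : Set G) ∩ (U₁ * U₁),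
      x * y ∈ (Γ : Set G) ∩ (U₁ * U₁) := by
    intro x hx y hy
    refine ⟨Γ.mul_mem hx.1 hy.1, ?_⟩
    by_contra h
    have : x * y ∈ (Γ : Set G) ∩ ((U₁ * U₁ * U₁ * U₁) \ (U₁ * U₁)) := by
      refine ⟨Γ.mul_mem hx.1 hy.1, ?_, h⟩
      have := Set.mul_mem_mul hx.2 hy.2
      rwa [← mul_assoc] at this
    rw [havoid] at this
    exact this
  let K : Subgroup G :=
    { carrier := (Γ : Set G) ∩ (U₁ * U₁)
      one_mem' := ⟨Γ.one_mem, by simpa using Set.mul_mem_mul hone hone⟩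
      mul_mem' := fun hx hy => hmul _ hx _ hy
      inv_mem' := fun hx => ⟨Γ.inv_mem hx.1, hinv _ hx.2⟩ }
  have hKsub : (K : Set G) ⊆ U := fun x hx => hU₁ hx.2
  have := hNSS K hKsub
  ext x
  constructor
  · intro hx
    have hxK : x ∈ K := hx
    rw [this] at hxK
    simpa using hxK
  · rintro rfl
    exact ⟨Γ.one_mem, by simpa using Set.mul_mem_mul hone hone⟩
end
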